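/- Let n ≥ 1 and C₀ ≥ 1, and let E ⊂ ℝ^{n+1} be an n-dimensional ADR set with constant C₀. There is κ₀ = κ₀(n, C₀) such that the following holds for every κ ≥ κ₀. Let {Q_j}_{j ≥ 1} be pairwise disjoint subsets of E with associated lengths ℓ_j > 0 satisfying diam Q_j ≤ C₀ ℓ_j and H^n(Q_j) ≥ C₀^{-1} ℓ_j^n, and suppose dist(Q_i, Q_j) ≥ κ max{ℓ_i, ℓ_j} for all i ≠ j. Let S₀ ⊂ ℝ^{n+1} be either empty or an n-dimensional ADR set with constant C₀, and for each j ≥ 1 let S_j ⊂ ℝ^{n+1} be an n-dimensional ADR set with constant C₀ such that S_j ⊆ {Y ∈ ℝ^{n+1} : dist(Y, Q_j) ≤ C₀ ℓ_j}. Then the set S := S₀ ∪ ⋃_{j ≥ 1} S_j satisfies the upper ADR bound H^n(S ∩ B(x,r)) ≤ C r^n for every x ∈ ℝ^{n+1} and every r > 0, where C depends only on n, C₀ and κ. -/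

import Mathlib

open Metric MeasureTheory Set
open scoped NNReal ENNReal

noncomputable section

/-- `ℝ^{n+1}` -/
abbrev Euc (n : ℕ) : Type := EuclideanSpace ℝ (Fin (n + 1))

/-- The distance between two subsets of `ℝ^{n+1}`. -/
def sDist {n : ℕ} (A B : Set (Euc n)) : ℝ := sInf (Set.image2 dist A B)

/-- `E ⊆ ℝ^{n+1}` is an `n`-dimensional Ahlfors-David regular set with constant `C`. -/
def IsADR (n : ℕ) (E : Set (Euc n)) (C : ℝ) : Prop :=
  IsClosed E ∧ 1 ≤ C ∧ ∀ x ∈ E, ∀ r : ℝ, 0 < r → ENNReal.ofReal r < EMetric.diam E →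
    ENNReal.ofReal (C⁻¹ * r ^ n) ≤ μH[(n : ℝ)] (E ∩ ball x r) ∧
      μH[(n : ℝ)] (E ∩ ball x r) ≤ ENNReal.ofReal (C * r ^ n)

lemma exists_cover (n : ℕ) : ∃ T : Finset (Euc n), ∀ (x : Euc n) (d : ℝ), 0 < d →
    closedBall x d ⊆ ⋃ t ∈ T, ball (x + d • t) (d / 4) := by
  have hc : IsCompact (closedBall (0 : Euc n) 1) := isCompact_closedBall _ _
  obtain ⟨T, hT⟩ := hc.elim_finite_subcover (fun z : Euc n => ball z (1/4))
    (fun z => isOpen_ball) (fun y hy => mem_iUnion.2 ⟨y, mem_ball_self (by norm_num)⟩)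
  refine ⟨T, fun x d hd y hy => ?_⟩
  have hz : d⁻¹ • (y - x) ∈ closedBall (0 : Euc n) 1 := by
    rw [mem_closedBall, dist_zero_right, norm_smul, norm_inv, Real.norm_of_nonneg hd.le]
    rw [mem_closedBall, dist_eq_norm] at hy
    rw [inv_mul_le_iff₀ hd]
    linarith
  obtain ⟨t, htT, ht⟩ := mem_iUnion₂.1 (hT hz)
  refine mem_iUnion₂.2 ⟨t, htT, ?_⟩
  rw [mem_ball, dist_eq_norm] at ht ⊢
  have : y - (x + d • t) = d • (d⁻¹ • (y - x) - t) := by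
    rw [smul_sub, smul_inv_smul₀ hd.ne']
    abel
  rw [this, norm_smul, Real.norm_of_nonneg hd.le]
  calc d * ‖d⁻¹ • (y - x) - t‖ < d * (1/4) := by
        exact mul_lt_mul_of_pos_left ht hd
    _ = d / 4 := by ring

lemma cover_bound {n : ℕ} {T : Finset (Euc n)}
    (hT : ∀ (x : Euc n) (d : ℝ), 0 < d → closedBall x d ⊆ ⋃ t ∈ T, ball (x + d • t) (d / 4))
    {F : Set (Euc n)} {c : Euc n} {d M : ℝ} (hd : 0 < d)
    (hball : ∀ w ∈ F, μH[(n : ℝ)] (F ∩ ball w (d / 2)) ≤ ENNReal.ofReal M) :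
    μH[(n : ℝ)] (F ∩ closedBall c d) ≤ (T.card : ℝ≥0∞) * ENNReal.ofReal M := by
  have hsub : F ∩ closedBall c d ⊆ ⋃ t ∈ T, (F ∩ ball (c + d • t) (d / 4)) := by
    intro y hy
    obtain ⟨t, htT, ht⟩ := mem_iUnion₂.1 (hT c d hd hy.2)
    exact mem_iUnion₂.2 ⟨t, htT, hy.1, ht⟩
  calc μH[(n : ℝ)] (F ∩ closedBall c d)
      ≤ ∑ t ∈ T, μH[(n : ℝ)] (F ∩ ball (c + d • t) (d / 4)) :=
        le_trans (measure_mono hsub) (measure_biUnion_finset_le T _)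
    _ ≤ ∑ _t ∈ T, ENNReal.ofReal M := by
        refine Finset.sum_le_sum fun t _ => ?_
        rcases (F ∩ ball (c + d • t) (d / 4)).eq_empty_or_nonempty with he | ⟨w, hwF, hwb⟩
        · simp [he]
        · have hsub2 : F ∩ ball (c + d • t) (d / 4) ⊆ F ∩ ball w (d / 2) := by
            intro y hy
            refine ⟨hy.1, ?_⟩
            rw [mem_ball] at *
            have := dist_triangle y (c + d • t) w
            have hw' : dist (c + d • t) w < d / 4 := by
              rw [dist_comm]; exact hwb
            have hy' := hy.2
            rw [mem_ball] at hy'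
            linarith
          exact le_trans (measure_mono hsub2) (hball w hwF)
    _ = (T.card : ℝ≥0∞) * ENNReal.ofReal M := by
        rw [Finset.sum_const, nsmul_eq_mul]

lemma adr_global {n : ℕ} (hn : 1 ≤ n) {C₀ : ℝ} (hC₀ : 1 ≤ C₀) {T : Finset (Euc n)}
    (hT : ∀ (x : Euc n) (d : ℝ), 0 < d → closedBall x d ⊆ ⋃ t ∈ T, ball (x + d • t) (d / 4))
    {F : Set (Euc n)} (hF : IsADR n F C₀) {d : ℝ} (hd : 0 < d)
    (hdiam : EMetric.diam F ≤ ENNReal.ofReal d) :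
    μH[(n : ℝ)] F ≤ (T.card : ℝ≥0∞) * ENNReal.ofReal (C₀ * d ^ n) := by
  have hnpos : (0 : ℝ) < (n : ℝ) := by exact_mod_cast hn
  by_cases h0 : EMetric.diam F = 0
  · have hss : F.Subsingleton := EMetric.diam_eq_zero_iff.1 h0
    haveI := MeasureTheory.Measure.noAtoms_hausdorff (Euc n) hnpos
    rw [hss.measure_zero]
    exact zero_le
  · rcases F.eq_empty_or_nonempty with rfl | ⟨w0, hw0⟩
    · simp
  -- positive finite diameter
    set d₀ : ℝ := (EMetric.diam F).toReal with hd₀def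
    have hfin : EMetric.diam F ≠ ⊤ := by
      exact ne_top_of_le_ne_top ENNReal.ofReal_ne_top hdiam
    have hd₀pos : 0 < d₀ := ENNReal.toReal_pos h0 hfin
    have hd₀d : d₀ ≤ d := ENNReal.toReal_le_of_le_ofReal hd.le hdiam
    have hFsub : F ⊆ closedBall w0 d₀ := by
      intro w hw
      rw [mem_closedBall, ← ENNReal.ofReal_le_ofReal_iff hd₀pos.le, ← edist_dist,
        hd₀def, ENNReal.ofReal_toReal hfin]
      exact EMetric.edist_le_diam_of_mem hw hw0
    have hball : ∀ w ∈ F, μH[(n : ℝ)] (F ∩ ball w (d₀ / 2)) ≤ ENNReal.ofReal (C₀ * d ^ n) := by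
      intro w hw
      have hρ : (0:ℝ) < 3 / 4 * d₀ := by linarith
      have hρlt : ENNReal.ofReal (3 / 4 * d₀) < EMetric.diam F := by
        have h2 : ENNReal.ofReal (3 / 4 * d₀) < ENNReal.ofReal d₀ :=
          (ENNReal.ofReal_lt_ofReal_iff hd₀pos).2 (by linarith)
        rwa [ENNReal.ofReal_toReal hfin] at h2
      have := (hF.2.2 w hw (3 / 4 * d₀) hρ hρlt).2
      refine le_trans (measure_mono ?_) (le_trans this (ENNReal.ofReal_le_ofReal ?_))
      · exact inter_subset_inter_right _ (ball_subset_ball (by linarith))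
      · have h1 : (3 / 4 * d₀) ^ n ≤ d ^ n :=
          pow_le_pow_left₀ (by linarith) (by linarith) n
        nlinarith [pow_nonneg (le_trans (by linarith : (0:ℝ) ≤ 3/4*d₀) le_rfl) n]
    have : F = F ∩ closedBall w0 d₀ := (inter_eq_left.2 hFsub).symm
    rw [this]
    exact cover_bound hT hd₀pos hball

lemma adr_upper {n : ℕ} (hn : 1 ≤ n) {C₀ : ℝ} (hC₀ : 1 ≤ C₀) :
    ∃ C₁ : ℝ, 1 ≤ C₁ ∧ ∀ F : Set (Euc n), IsADR n F C₀ → ∀ (x : Euc n) (r : ℝ), 0 < r →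
      μH[(n : ℝ)] (F ∩ ball x r) ≤ ENNReal.ofReal (C₁ * r ^ n) := by
  obtain ⟨T, hT⟩ := exists_cover n
  refine ⟨((T.card : ℝ) + 1) * C₀, ?_, ?_⟩
  · nlinarith [Nat.cast_nonneg (α := ℝ) T.card]
  intro F hF x r hr
  have hrn : (0:ℝ) < r ^ n := pow_pos hr n
  have hend : (T.card : ℝ≥0∞) * ENNReal.ofReal (C₀ * r ^ n)
      ≤ ENNReal.ofReal (((T.card : ℝ) + 1) * C₀ * r ^ n) := by
    rw [← ENNReal.ofReal_natCast T.card, ← ENNReal.ofReal_mul (by positivity)]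
    refine ENNReal.ofReal_le_ofReal ?_
    nlinarith [Nat.cast_nonneg (α := ℝ) T.card]
  by_cases h : ENNReal.ofReal (r / 2) < EMetric.diam F
  · have hball : ∀ w ∈ F, μH[(n : ℝ)] (F ∩ ball w (r / 2)) ≤ ENNReal.ofReal (C₀ * r ^ n) := by
      intro w hw
      refine le_trans (hF.2.2 w hw (r / 2) (by linarith) h).2 (ENNReal.ofReal_le_ofReal ?_)
      have : (r / 2) ^ n ≤ r ^ n := pow_le_pow_left₀ (by linarith) (by linarith) n
      nlinarith
    refine le_trans (measure_mono (inter_subset_inter_right _ ball_subset_closedBall)) ?_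
    exact le_trans (cover_bound hT hr hball) hend
  · push_neg at h
    have hdiam : EMetric.diam F ≤ ENNReal.ofReal r :=
      le_trans h (ENNReal.ofReal_le_ofReal (by linarith))
    refine le_trans (measure_mono inter_subset_left) ?_
    exact le_trans (adr_global hn hC₀ hT hF hr hdiam) hend

lemma lemmaP {n : ℕ} {C₀ C₁ : ℝ} (hC₀ : 1 ≤ C₀) (hC₁ : 1 ≤ C₁)
    (hA : ∀ F : Set (Euc n), IsADR n F C₀ → ∀ (y : Euc n) (ρ : ℝ), 0 < ρ →
      μH[(n : ℝ)] (F ∩ ball y ρ) ≤ ENNReal.ofReal (C₁ * ρ ^ n))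
    {E Q F : Set (Euc n)} (hE : IsADR n E C₀) (hQE : Q ⊆ E) (hQne : Q.Nonempty)
    (hF : IsADR n F C₀) {l : ℝ} (hl : 0 < l)
    (hFQ : ∀ z ∈ F, Metric.infDist z Q ≤ C₀ * l)
    (hlE : ENNReal.ofReal l < EMetric.diam E)
    (x : Euc n) {r : ℝ} (hr : 0 < r) (hlr : l ≤ r) :
    ∃ V : Finset (Euc n), (↑V : Set (Euc n)) ⊆ Q ∧
      (∀ q ∈ V, ball q l ⊆ ball x (4 * C₀ * r)) ∧
      ((V : Set (Euc n)).PairwiseDisjoint fun q => ball q l) ∧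
      μH[(n : ℝ)] (F ∩ ball x r) ≤
        ENNReal.ofReal (C₁ * (16 * C₀) ^ n * C₀) * ∑ q ∈ V, μH[(n : ℝ)] (E ∩ ball q l) := by
  have hC₀l : 0 < C₀ * l := by nlinarith
  set s : Set (Euc n) := F ∩ ball x r with hs_def
  rcases s.eq_empty_or_nonempty with hs | hs
  · exact ⟨∅, by simp, by simp, by simp, by simp [← hs_def, hs]⟩
  have hKsub : closure s ⊆ F ∩ closedBall x r := by
    have h1 : s ⊆ F ∩ closedBall x r := inter_subset_inter_right _ ball_subset_closedBall
    exact closure_minimal h1 (hF.1.inter Metric.isClosed_closedBall)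
  have hKc : IsCompact (closure s) := by
    refine Metric.isCompact_of_isClosed_isBounded isClosed_closure ?_
    exact (Metric.isBounded_closedBall.subset
      (hKsub.trans inter_subset_right)).subset (subset_refl _)
  obtain ⟨t, htK, htfin, htcov⟩ := hKc.finite_cover_balls hl
  -- Vitali
  obtain ⟨u, hut, hu_disj, hu_cov⟩ :=
    Vitali.exists_disjoint_subfamily_covering_enlargement_closedBall t id
      (fun _ => 3 * (C₀ * l)) (3 * (C₀ * l)) (fun _ _ => le_rfl) 5 (by norm_num)
  have huf : u.Finite := htfin.subset hut
  have huF : ∀ z ∈ u, z ∈ F ∧ dist z x ≤ r := by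
    intro z hz
    have := hKsub (htK (hut hz))
    exact ⟨this.1, this.2⟩
  -- choose nearby points of Q
  have hex : ∀ z ∈ u, ∃ q, q ∈ Q ∧ dist z q < 2 * (C₀ * l) := by
    intro z hz
    have h1 : Metric.infDist z Q < 2 * (C₀ * l) :=
      lt_of_le_of_lt (hFQ z (huF z hz).1) (by nlinarith)
    obtain ⟨q, hq, hqd⟩ := (Metric.infDist_lt_iff hQne).1 h1
    exact ⟨q, hq, hqd⟩
  classical
  let φ : Euc n → Euc n := fun z =>
    if h : ∃ q, q ∈ Q ∧ dist z q < 2 * (C₀ * l) then h.choose else hQne.choose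
  have hφ : ∀ z ∈ u, φ z ∈ Q ∧ dist z (φ z) < 2 * (C₀ * l) := by
    intro z hz
    have h := hex z hz
    simp only [φ, dif_pos h]
    exact h.choose_spec
  -- separation of the chosen points
  have hsep : ∀ z ∈ u, ∀ z' ∈ u, z ≠ z' → 2 * l ≤ dist (φ z) (φ z') := by
    intro z hz z' hz' hne
    by_contra hlt
    push_neg at hlt
    have hzz' : dist z z' < 6 * (C₀ * l) := by
      have h1 := dist_triangle z (φ z) z'
      have h2 := dist_triangle (φ z) (φ z') z'
      have h3 := (hφ z hz).2
      have h4 := (hφ z' hz').2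
      have h5 : dist (φ z') z' = dist z' (φ z') := dist_comm _ _
      nlinarith [dist_nonneg (x := φ z) (y := φ z'), dist_comm z' (φ z')]
    have hdisj := hu_disj hz hz' hne
    have hm : midpoint ℝ z z' ∈ closedBall (id z) (3 * (C₀ * l)) ∩
        closedBall (id z') (3 * (C₀ * l)) := by
      constructor
      · simp only [mem_closedBall, id]
        rw [dist_midpoint_left (𝕜 := ℝ)]
        simp only [Real.norm_ofNat]
        nlinarith
      · simp only [mem_closedBall, id]
        rw [dist_midpoint_right (𝕜 := ℝ)]
        simp only [Real.norm_ofNat]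
        nlinarith
    exact (hdisj.ne_of_mem hm.1 hm.2) rfl
  have hφinj : ∀ z ∈ u, ∀ z' ∈ u, φ z = φ z' → z = z' := by
    intro z hz z' hz' heq
    by_contra hne
    have := hsep z hz z' hz' hne
    rw [heq, dist_self] at this
    nlinarith
  -- the finset
  set uF : Finset (Euc n) := huf.toFinset with huF_def
  have hmem : ∀ z, z ∈ uF ↔ z ∈ u := fun z => huf.mem_toFinset
  refine ⟨uF.image φ, ?_, ?_, ?_, ?_⟩
  · intro q hq
    obtain ⟨z, hz, rfl⟩ := Finset.mem_image.1 (by exact_mod_cast hq)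
    exact (hφ z ((hmem z).1 hz)).1
  · intro q hq y hy
    obtain ⟨z, hz, rfl⟩ := Finset.mem_image.1 hq
    have hzu := (hmem z).1 hz
    have h1 := (hφ z hzu).2
    have h2 := (huF z hzu).2
    rw [mem_ball] at hy ⊢
    have h3 := dist_triangle y (φ z) z
    have h4 := dist_triangle y z x
    have h5 : dist (φ z) z = dist z (φ z) := dist_comm _ _
    nlinarith
  · intro q hq q' hq' hne
    simp only [Finset.coe_image, mem_image, Finset.mem_coe] at hq hq'
    obtain ⟨z, hz, rfl⟩ := hq
    obtain ⟨z', hz', rfl⟩ := hq'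
    have hzu := (hmem z).1 hz
    have hzu' := (hmem z').1 hz'
    have hzne : z ≠ z' := fun h => hne (by rw [h])
    have h2 := hsep z hzu z' hzu' hzne
    exact ball_disjoint_ball (by linarith)
  · -- the measure bound
    have hcov2 : F ∩ ball x r ⊆ ⋃ z ∈ uF, (F ∩ closedBall z (5 * (3 * (C₀ * l)))) := by
      intro y hy
      obtain ⟨z₀, hz₀t, hz₀b⟩ := mem_iUnion₂.1 (htcov (subset_closure hy))
      obtain ⟨b, hb, hsub15⟩ := hu_cov z₀ hz₀t
      refine mem_iUnion₂.2 ⟨b, (hmem b).2 hb, hy.1, ?_⟩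
      have hy3 : y ∈ closedBall (id z₀) (3 * (C₀ * l)) := by
        simp only [id, mem_closedBall]
        rw [mem_ball] at hz₀b
        nlinarith
      exact hsub15 hy3
    have hstep : ∀ z ∈ uF, μH[(n : ℝ)] (F ∩ closedBall z (5 * (3 * (C₀ * l)))) ≤
        ENNReal.ofReal (C₁ * (16 * C₀) ^ n * C₀) * μH[(n : ℝ)] (E ∩ ball (φ z) l) := by
      intro z hz
      have hzu := (hmem z).1 hz
      have h1 : μH[(n : ℝ)] (F ∩ closedBall z (5 * (3 * (C₀ * l)))) ≤
          ENNReal.ofReal (C₁ * (16 * (C₀ * l)) ^ n) := by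
        have hsubb : F ∩ closedBall z (5 * (3 * (C₀ * l))) ⊆ F ∩ ball z (16 * (C₀ * l)) :=
          inter_subset_inter_right _ (closedBall_subset_ball (by nlinarith))
        exact le_trans (measure_mono hsubb) (hA F hF z (16 * (C₀ * l)) (by nlinarith))
      refine le_trans h1 ?_
      have hlow := (hE.2.2 (φ z) (hQE (hφ z hzu).1) l hl hlE).1
      calc ENNReal.ofReal (C₁ * (16 * (C₀ * l)) ^ n)
          = ENNReal.ofReal (C₁ * (16 * C₀) ^ n * C₀) * ENNReal.ofReal (C₀⁻¹ * l ^ n) := by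
            rw [← ENNReal.ofReal_mul (by positivity)]
            congr 1
            rw [show (16 * (C₀ * l)) = (16 * C₀) * l by ring, mul_pow]
            field_simp
        _ ≤ ENNReal.ofReal (C₁ * (16 * C₀) ^ n * C₀) * μH[(n : ℝ)] (E ∩ ball (φ z) l) :=
            mul_le_mul_right hlow _
    calc μH[(n : ℝ)] (F ∩ ball x r)
        ≤ ∑ z ∈ uF, μH[(n : ℝ)] (F ∩ closedBall z (5 * (3 * (C₀ * l)))) :=
          le_trans (measure_mono hcov2) (measure_biUnion_finset_le uF _)
      _ ≤ ∑ z ∈ uF, ENNReal.ofReal (C₁ * (16 * C₀) ^ n * C₀) * μH[(n : ℝ)] (E ∩ ball (φ z) l) :=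
          Finset.sum_le_sum hstep
      _ = ENNReal.ofReal (C₁ * (16 * C₀) ^ n * C₀) * ∑ z ∈ uF, μH[(n : ℝ)] (E ∩ ball (φ z) l) :=
          (Finset.mul_sum _ _ _).symm
      _ = ENNReal.ofReal (C₁ * (16 * C₀) ^ n * C₀) *
            ∑ q ∈ uF.image φ, μH[(n : ℝ)] (E ∩ ball q l) := by
          congr 1
          refine (Finset.sum_image (f := fun q => μH[(n : ℝ)] (E ∩ ball q l))
            (g := φ) (s := uF) ?_).symm
          intro z hz z' hz' h
          exact hφinj z ((hmem z).1 hz) z' ((hmem z').1 hz') h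

lemma tsum_ite_le {s : Set ℕ} (hs : s.Subsingleton) (f : ℕ → ℝ≥0∞) {M : ℝ≥0∞}
    (hf : ∀ j ∈ s, f j ≤ M) [∀ j, Decidable (j ∈ s)] :
    ∑' j, (if j ∈ s then f j else 0) ≤ M := by
  rcases s.eq_empty_or_nonempty with rfl | ⟨a, ha⟩
  · simp
  · have h0 : ∀ b ≠ a, (if b ∈ s then f b else 0) = 0 := by
      intro b hb
      rw [if_neg]
      intro hbs
      exact hb (hs hbs ha)
    rw [tsum_eq_single a h0, if_pos ha]
    exact hf a ha

set_option maxHeartbeats 2000000 in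
/-- **Upper ADR bound for unions of separated ADR pieces.** Let `E` be
`n`-dimensional ADR with constant `C₀` and let `{Q_j}` be pairwise disjoint subsets
of `E` with lengths `ℓ_j`, `diam Q_j ≤ C₀ ℓ_j`, `H^n(Q_j) ≥ C₀⁻¹ ℓ_jⁿ`, mutually
`κ`-separated for `κ ≥ κ₀(n, C₀)`. If `S₀` is empty or `n`-dimensional ADR with
constant `C₀`, and each `S_j` is `n`-dimensional ADR with constant `C₀` and lies in
a `C₀ ℓ_j`-neighborhood of `Q_j`, then `S = S₀ ∪ ⋃_j S_j` satisfies the upper ADR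
bound `H^n(S ∩ B(x,r)) ≤ C rⁿ` for all `x`, `r > 0`, with `C = C(n, C₀, κ)`. -/
theorem upper_ADR_of_separated_union (n : ℕ) (hn : 1 ≤ n) (C₀ : ℝ) (hC₀ : 1 ≤ C₀) :
    ∃ κ₀ : ℝ, 0 < κ₀ ∧ ∀ κ : ℝ, κ₀ ≤ κ →
      ∃ C : ℝ, 0 < C ∧
        ∀ E : Set (Euc n), IsADR n E C₀ →
        ∀ (Q : ℕ → Set (Euc n)) (l : ℕ → ℝ),
          (∀ j, Q j ⊆ E) →
          (∀ i j, i ≠ j → Q i ∩ Q j = ∅) →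
          (∀ j, 0 < l j) →
          (∀ j, Metric.diam (Q j) ≤ C₀ * l j) →
          (∀ j, ENNReal.ofReal (C₀⁻¹ * l j ^ n) ≤ μH[(n : ℝ)] (Q j)) →
          (∀ i j, i ≠ j → κ * max (l i) (l j) ≤ sDist (Q i) (Q j)) →
        ∀ S₀ : Set (Euc n), S₀ = ∅ ∨ IsADR n S₀ C₀ →
        ∀ S : ℕ → Set (Euc n),
          (∀ j, IsADR n (S j) C₀) →
          (∀ j, S j ⊆ {Y : Euc n | Metric.infDist Y (Q j) ≤ C₀ * l j}) →
        ∀ (x : Euc n) (r : ℝ), 0 < r →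
          μH[(n : ℝ)] ((S₀ ∪ ⋃ j, S j) ∩ ball x r) ≤ ENNReal.ofReal (C * r ^ n) := by
  classical
  obtain ⟨C₁, hC₁, hA⟩ := adr_upper hn hC₀
  have hC₀pos : (0 : ℝ) < C₀ := by linarith
  have hC₁pos : (0 : ℝ) < C₁ := by linarith
  set c₃ : ℝ := C₁ * (16 * C₀) ^ n * C₀ with hc₃def
  have hc₃pos : 0 < c₃ := by positivity
  set X : ℝ := c₃ * (C₁ * (4 * C₀) ^ n) with hXdef
  have hXpos : 0 < X := by positivity
  refine ⟨2 * C₀ + 3, by linarith, fun κ hκ => ⟨3 * C₁ + X, by linarith, ?_⟩⟩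
  intro E hE Q l hQE hQdisj hl hdiamQ hQl hsep S₀ hS₀ S hS hSQ x r hr
  have hκ5 : (5 : ℝ) ≤ κ := by linarith
  have hrn : (0 : ℝ) < r ^ n := pow_pos hr n
  -- each Q j is nonempty
  have hQne : ∀ j, (Q j).Nonempty := by
    intro j
    rcases (Q j).eq_empty_or_nonempty with h | h
    · exfalso
      have h1 := hQl j
      rw [h, measure_empty, nonpos_iff_eq_zero] at h1
      have h2 : 0 < ENNReal.ofReal (C₀⁻¹ * l j ^ n) :=
        ENNReal.ofReal_pos.2 (by have := hl j; positivity)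
      rw [h1] at h2
      exact lt_irrefl _ h2
    · exact h
  have hsDist_le : ∀ i j, ∀ a ∈ Q i, ∀ b ∈ Q j, sDist (Q i) (Q j) ≤ dist a b := by
    intro i j a ha b hb
    apply csInf_le
    · refine ⟨0, ?_⟩
      rintro p ⟨a', _, b', _, rfl⟩
      exact dist_nonneg
    · exact ⟨a, ha, b, hb, rfl⟩
  set f : ℕ → ℝ≥0∞ := fun j => μH[(n : ℝ)] (S j ∩ ball x r) with hfdef
  set Sm : Set ℕ := {j | (S j ∩ ball x r).Nonempty ∧ l j ≤ r} with hSmdef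
  set Bg : Set ℕ := {j | (S j ∩ ball x r).Nonempty ∧ r < l j} with hBgdef
  -- S₀ piece
  have hS₀bound : μH[(n : ℝ)] (S₀ ∩ ball x r) ≤ ENNReal.ofReal (C₁ * r ^ n) := by
    rcases hS₀ with rfl | hadr
    · simp
    · exact hA S₀ hadr x r hr
  -- pointwise split
  have hsplit : ∀ j, f j ≤ (if j ∈ Sm then f j else 0) + (if j ∈ Bg then f j else 0) := by
    intro j
    rcases (S j ∩ ball x r).eq_empty_or_nonempty with he | hne
    · simp [hfdef, he]
    · rcases le_or_gt (l j) r with hle | hlt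
      · rw [if_pos (show j ∈ Sm from ⟨hne, hle⟩)]
        exact le_add_right le_rfl
      · rw [if_pos (show j ∈ Bg from ⟨hne, hlt⟩)]
        exact le_add_left le_rfl
  -- big pieces: at most one
  have hBg_sub : Bg.Subsingleton := by
    intro i hi j hj
    by_contra hne
    obtain ⟨yi, hyiS, hyib⟩ := hi.1
    obtain ⟨yj, hyjS, hyjb⟩ := hj.1
    have hdi : Metric.infDist yi (Q i) < C₀ * l i + r / 2 := by
      have := hSQ i hyiS; simp only [mem_setOf_eq] at this; linarith
    have hdj : Metric.infDist yj (Q j) < C₀ * l j + r / 2 := by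
      have := hSQ j hyjS; simp only [mem_setOf_eq] at this; linarith
    obtain ⟨qi, hqi, hqid⟩ := (Metric.infDist_lt_iff (hQne i)).1 hdi
    obtain ⟨qj, hqj, hqjd⟩ := (Metric.infDist_lt_iff (hQne j)).1 hdj
    have h1 := hsep i j hne
    have h2 := hsDist_le i j qi hqi qj hqj
    have h3 : dist qi qj ≤ dist qi yi + dist yi x + dist x yj + dist yj qj := by
      have t1 := dist_triangle qi yi qj
      have t2 := dist_triangle yi x qj
      have t3 := dist_triangle x yj qj
      linarith
    rw [mem_ball] at hyib hyjb
    set m := max (l i) (l j) with hmdef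
    have hlim : l i ≤ m := le_max_left _ _
    have hljm : l j ≤ m := le_max_right _ _
    have hrm : r < m := lt_of_lt_of_le hi.2 hlim
    have h4 : C₀ * l i ≤ C₀ * m := by nlinarith
    have h5 : C₀ * l j ≤ C₀ * m := by nlinarith
    have h6 : (2 * C₀ + 3) * m ≤ κ * m := by nlinarith
    have h7 : dist qi yi = dist yi qi := dist_comm _ _
    have h8 : dist x yj = dist yj x := dist_comm _ _
    nlinarith
  have hBgBound : ∑' j, (if j ∈ Bg then f j else 0) ≤ ENNReal.ofReal (C₁ * r ^ n) :=
    tsum_ite_le hBg_sub f (fun j _ => hA (S j) (hS j) x r hr)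
  -- small pieces
  have hSmBound : ∑' j, (if j ∈ Sm then f j else 0) ≤
      ENNReal.ofReal ((C₁ + X) * r ^ n) := by
    by_cases hsub : Sm.Subsingleton
    · refine le_trans (tsum_ite_le hsub f (fun j _ => hA (S j) (hS j) x r hr)) ?_
      exact ENNReal.ofReal_le_ofReal (by nlinarith)
    · rw [Set.not_subsingleton_iff] at hsub
      obtain ⟨a, ha, b, hb, hab⟩ := hsub
      -- diameter of E is big enough
      have hdiamE : ∀ j ∈ Sm, ENNReal.ofReal (l j) < EMetric.diam E := by
        intro j hj
        have hpartner : ∃ i ∈ Sm, i ≠ j := by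
          by_cases hja : j = a
          · exact ⟨b, hb, by rw [hja]; exact fun h => hab h.symm⟩
          · exact ⟨a, ha, fun h => hja h.symm⟩
        obtain ⟨i, _, hij⟩ := hpartner
        obtain ⟨qi, hqi⟩ := hQne i
        obtain ⟨qj, hqj⟩ := hQne j
        have h1 := hsep i j hij
        have h2 := hsDist_le i j qi hqi qj hqj
        have h3 : l j < dist qi qj := by
          have hm := le_max_right (l i) (l j)
          have hκ0 : (0 : ℝ) ≤ κ := by linarith
          have e1 : κ * l j ≤ κ * max (l i) (l j) := mul_le_mul_of_nonneg_left hm hκ0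
          have e2 : l j < κ * l j := by nlinarith [hl j]
          linarith
        calc ENNReal.ofReal (l j) < ENNReal.ofReal (dist qi qj) :=
              (ENNReal.ofReal_lt_ofReal_iff (lt_trans (hl j) h3)).2 h3
          _ = edist qi qj := (edist_dist qi qj).symm
          _ ≤ EMetric.diam E := EMetric.edist_le_diam_of_mem (hQE i hqi) (hQE j hqj)
      -- choose the packings
      have hchoice : ∀ j, ∃ V : Finset (Euc n), ((↑V : Set (Euc n)) ⊆ Q j) ∧
          (∀ q ∈ V, ball q (l j) ⊆ ball x (4 * C₀ * r)) ∧
          ((↑V : Set (Euc n)).PairwiseDisjoint fun q => ball q (l j)) ∧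
          (j ∈ Sm → f j ≤ ENNReal.ofReal c₃ * ∑ q ∈ V, μH[(n : ℝ)] (E ∩ ball q (l j))) ∧
          (j ∉ Sm → V = ∅) := by
        intro j
        by_cases hj : j ∈ Sm
        · obtain ⟨V, h1, h2, h3, h4⟩ := lemmaP hC₀ hC₁ hA hE (hQE j) (hQne j) (hS j)
            (hl j) (fun z hz => hSQ j hz) (hdiamE j hj) x hr hj.2
          exact ⟨V, h1, h2, h3, fun _ => h4, fun h => absurd hj h⟩
        · exact ⟨∅, by simp, by simp, by simp, fun h => absurd h hj, fun _ => rfl⟩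
      choose V hV1 hV2 hV3 hV4 hV5 using hchoice
      set t : ℕ → Set (Euc n) := fun j => ⋃ q ∈ V j, (E ∩ ball q (l j)) with htdef
      have htmeas : ∀ j, MeasurableSet (t j) := by
        intro j
        exact (V j).finite_toSet.measurableSet_biUnion
          (fun q _ => (hE.1.measurableSet.inter measurableSet_ball))
      have htdisj : Pairwise (Function.onFun Disjoint t) := by
        intro i j hij
        rw [Function.onFun]
        rw [Set.disjoint_left]
        intro z hzi hzj
        simp only [htdef, mem_iUnion, exists_prop] at hzi hzj
        obtain ⟨q, hqV, _, hqz⟩ := hzi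
        obtain ⟨q', hqV', _, hqz'⟩ := hzj
        have hq : q ∈ Q i := hV1 i hqV
        have hq' : q' ∈ Q j := hV1 j hqV'
        have h1 := hsep i j hij
        have h2 := hsDist_le i j q hq q' hq'
        rw [mem_ball] at hqz hqz'
        have h3 : dist q q' ≤ dist q z + dist z q' := dist_triangle _ _ _
        have h4 : dist q z = dist z q := dist_comm _ _
        set m := max (l i) (l j)
        have hlim : l i ≤ m := le_max_left _ _
        have hljm : l j ≤ m := le_max_right _ _
        have hm : 0 < m := lt_of_lt_of_le (hl i) hlim
        nlinarith
      have hsum_j : ∀ j, (if j ∈ Sm then f j else 0) ≤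
          ENNReal.ofReal c₃ * μH[(n : ℝ)] (t j) := by
        intro j
        by_cases hj : j ∈ Sm
        · rw [if_pos hj]
          refine le_trans (hV4 j hj) (le_of_eq ?_)
          congr 1
          rw [htdef]
          refine (measure_biUnion_finset ?_ ?_).symm
          · exact (hV3 j).mono (fun q => inter_subset_right)
          · exact fun q _ => hE.1.measurableSet.inter measurableSet_ball
        · rw [if_neg hj]
          exact zero_le
      have hUsub : (⋃ j, t j) ⊆ E ∩ ball x (4 * C₀ * r) := by
        intro z hz
        simp only [htdef, mem_iUnion, exists_prop] at hz
        obtain ⟨j, q, hqV, hzE, hzq⟩ := hz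
        exact ⟨hzE, hV2 j q hqV hzq⟩
      calc ∑' j, (if j ∈ Sm then f j else 0)
          ≤ ∑' j, ENNReal.ofReal c₃ * μH[(n : ℝ)] (t j) := ENNReal.tsum_le_tsum hsum_j
        _ = ENNReal.ofReal c₃ * ∑' j, μH[(n : ℝ)] (t j) := ENNReal.tsum_mul_left
        _ = ENNReal.ofReal c₃ * μH[(n : ℝ)] (⋃ j, t j) := by rw [measure_iUnion htdisj htmeas]
        _ ≤ ENNReal.ofReal c₃ * μH[(n : ℝ)] (E ∩ ball x (4 * C₀ * r)) := by
            exact mul_le_mul_right (measure_mono hUsub) _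
        _ ≤ ENNReal.ofReal c₃ * ENNReal.ofReal (C₁ * (4 * C₀ * r) ^ n) := by
            exact mul_le_mul_right (hA E hE x (4 * C₀ * r) (by positivity)) _
        _ ≤ ENNReal.ofReal ((C₁ + X) * r ^ n) := by
            rw [← ENNReal.ofReal_mul hc₃pos.le]
            refine ENNReal.ofReal_le_ofReal ?_
            rw [show (4 * C₀ * r) = (4 * C₀) * r by ring, mul_pow, hXdef]
            have h4C : (0:ℝ) ≤ (4 * C₀) ^ n := by positivity
            nlinarith
  -- assemble
  calc μH[(n : ℝ)] ((S₀ ∪ ⋃ j, S j) ∩ ball x r)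
      ≤ μH[(n : ℝ)] (S₀ ∩ ball x r) + μH[(n : ℝ)] (⋃ j, (S j ∩ ball x r)) := by
        rw [union_inter_distrib_right, iUnion_inter]
        exact measure_union_le _ _
    _ ≤ ENNReal.ofReal (C₁ * r ^ n) + ∑' j, f j :=
        add_le_add hS₀bound (measure_iUnion_le _)
    _ ≤ ENNReal.ofReal (C₁ * r ^ n) +
        (∑' j, (if j ∈ Sm then f j else 0) + ∑' j, (if j ∈ Bg then f j else 0)) := by
        refine add_le_add_right ?_ _
        refine le_trans (ENNReal.tsum_le_tsum hsplit) (le_of_eq ENNReal.tsum_add)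
    _ ≤ ENNReal.ofReal (C₁ * r ^ n) +
        (ENNReal.ofReal ((C₁ + X) * r ^ n) + ENNReal.ofReal (C₁ * r ^ n)) :=
        add_le_add_right (add_le_add hSmBound hBgBound) _
    _ ≤ ENNReal.ofReal ((3 * C₁ + X) * r ^ n) := by
        rw [← ENNReal.ofReal_add (by positivity) (by positivity),
          ← ENNReal.ofReal_add (by positivity) (by positivity)]
        exact ENNReal.ofReal_le_ofReal (by nlinarith)
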